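/- For all ML-formulas φ₁,…,φₙ,ψ, every Kripke model K, and every team T of K: K,T ⊨ =(φ₁,…,φₙ,ψ) if and only if K,T satisfies the ML(⊻)-formula ⋁_{a₁,…,aₙ ∈ {⊥,⊤}} (φ₁^{a₁} ∧ … ∧ φₙ^{aₙ} ∧ (ψ ⊻ ψ^⊥)), where the big ∨ is the splitting disjunction over all 2ⁿ sign tuples, φ^⊤ = φ, and φ^⊥ is the negation normal form of ¬φ. -/

import Mathlib

/-- A Kripke model over a (nonempty) type `W` of worlds: an accessibility
relation `R` and a valuation `V`. -/
structure Kripke (W : Type) where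
  R : W → W → Prop
  V : ℕ → Set W

/-- The image team `R[T] = {w | ∃ v ∈ T, v R w}`. -/
def Kripke.img {W : Type} (K : Kripke W) (T : Set W) : Set W :=
  {w | ∃ v ∈ T, K.R v w}

/-- `T[R]S`: every world of `T` has an `R`-successor in `S` and every world of
`S` has an `R`-predecessor in `T`. -/
def Kripke.step {W : Type} (K : Kripke W) (T S : Set W) : Prop :=
  (∀ w ∈ T, ∃ v ∈ S, K.R w v) ∧ (∀ v ∈ S, ∃ w ∈ T, K.R w v)

/-- Formulas of modal logic `ML` in negation normal form. -/
inductive MLForm : Type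
  | pos : ℕ → MLForm
  | neg : ℕ → MLForm
  | and : MLForm → MLForm → MLForm
  | or  : MLForm → MLForm → MLForm
  | dia : MLForm → MLForm
  | box : MLForm → MLForm

/-- Team semantics for `ML`. A team is a set of worlds. -/
def MLSat {W : Type} (K : Kripke W) : Set W → MLForm → Prop
  | T, .pos p => T ⊆ K.V p
  | T, .neg p => T ∩ K.V p = ∅
  | T, .and φ ψ => MLSat K T φ ∧ MLSat K T ψ
  | T, .or φ ψ => ∃ T₁ T₂, T₁ ∪ T₂ = T ∧ MLSat K T₁ φ ∧ MLSat K T₂ ψ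
  | T, .dia φ => ∃ T', K.step T T' ∧ MLSat K T' φ
  | T, .box φ => MLSat K (K.img T) φ

/-- Formulas of `ML(⊻)`: modal logic in negation normal form extended with
intuitionistic disjunction `⊻` (`idis`). -/
inductive MLIForm : Type
  | pos : ℕ → MLIForm
  | neg : ℕ → MLIForm
  | and : MLIForm → MLIForm → MLIForm
  | or  : MLIForm → MLIForm → MLIForm
  | dia : MLIForm → MLIForm
  | box : MLIForm → MLIForm
  | idis : MLIForm → MLIForm → MLIForm

/-- Team semantics for `ML(⊻)`. -/
def MLISat {W : Type} (K : Kripke W) : Set W → MLIForm → Prop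
  | T, .pos p => T ⊆ K.V p
  | T, .neg p => T ∩ K.V p = ∅
  | T, .and φ ψ => MLISat K T φ ∧ MLISat K T ψ
  | T, .or φ ψ => ∃ T₁ T₂, T₁ ∪ T₂ = T ∧ MLISat K T₁ φ ∧ MLISat K T₂ ψ
  | T, .dia φ => ∃ T', K.step T T' ∧ MLISat K T' φ
  | T, .box φ => MLISat K (K.img T) φ
  | T, .idis φ ψ => MLISat K T φ ∨ MLISat K T ψ

/-- All tuples (lists) of `n` signs (Booleans), i.e. `{⊥,⊤}ⁿ`. -/
def allBLists : ℕ → List (List Bool)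
  | 0 => [[]]
  | n + 1 => (allBLists n).flatMap fun l => [true :: l, false :: l]

/-- `φ^⊥`: the negation normal form of `¬φ`, for an `ML`-formula `φ` in
negation normal form. -/
def MLForm.nnfNeg : MLForm → MLForm
  | .pos p => .neg p
  | .neg p => .pos p
  | .and φ ψ => .or φ.nnfNeg ψ.nnfNeg
  | .or φ ψ => .and φ.nnfNeg ψ.nnfNeg
  | .dia φ => .box φ.nnfNeg
  | .box φ => .dia φ.nnfNeg

/-- The embedding of `ML` into `ML(⊻)`. -/
def MLForm.toMLI : MLForm → MLIForm
  | .pos p => .pos p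
  | .neg p => .neg p
  | .and φ ψ => .and φ.toMLI ψ.toMLI
  | .or φ ψ => .or φ.toMLI ψ.toMLI
  | .dia φ => .dia φ.toMLI
  | .box φ => .box φ.toMLI

/-- `φ^a`: the formula `φ` if `a = ⊤` and `φ^⊥` if `a = ⊥`. -/
def mlLit (φ : MLForm) (a : Bool) : MLIForm :=
  if a then φ.toMLI else φ.nnfNeg.toMLI

/-- The conjunction `φ₁^{a₁} ∧ … ∧ φₙ^{aₙ} ∧ (ψ ⊻ ψ^⊥)`. -/
def mlDepConj (φs : List MLForm) (a : List Bool) (ψ : MLForm) : MLIForm :=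
  (List.zipWith mlLit φs a).foldr MLIForm.and
    (MLIForm.idis ψ.toMLI ψ.nnfNeg.toMLI)

/-- Big splitting disjunction `⋁` of a (nonempty) list of formulas. -/
def mlBigOr : List MLIForm → MLIForm
  | [] => .pos 0
  | [φ] => φ
  | φ :: ψ :: l => .or φ (mlBigOr (ψ :: l))

/-- The `ML(⊻)`-formula
`⋁_{a₁,…,aₙ ∈ {⊥,⊤}} (φ₁^{a₁} ∧ … ∧ φₙ^{aₙ} ∧ (ψ ⊻ ψ^⊥))`. -/
def mlDepTranslation (φs : List MLForm) (ψ : MLForm) : MLIForm :=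
  mlBigOr ((allBLists φs.length).map fun a => mlDepConj φs a ψ)

/-- Formulas of extended modal dependence logic `EMDL`: modal logic in
negation normal form extended with dependence atoms `=(φ₁,…,φₙ,ψ)` over
`ML`-formulas. -/
inductive EMDLForm : Type
  | pos : ℕ → EMDLForm
  | neg : ℕ → EMDLForm
  | and : EMDLForm → EMDLForm → EMDLForm
  | or  : EMDLForm → EMDLForm → EMDLForm
  | dia : EMDLForm → EMDLForm
  | box : EMDLForm → EMDLForm
  | dep : List MLForm → MLForm → EMDLForm

/-- Team semantics for `EMDL`. -/
def EMDLSat {W : Type} (K : Kripke W) : Set W → EMDLForm → Prop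
  | T, .pos p => T ⊆ K.V p
  | T, .neg p => T ∩ K.V p = ∅
  | T, .and φ ψ => EMDLSat K T φ ∧ EMDLSat K T ψ
  | T, .or φ ψ => ∃ T₁ T₂, T₁ ∪ T₂ = T ∧ EMDLSat K T₁ φ ∧ EMDLSat K T₂ ψ
  | T, .dia φ => ∃ T', K.step T T' ∧ EMDLSat K T' φ
  | T, .box φ => EMDLSat K (K.img T) φ
  | T, .dep φs ψ => ∀ w ∈ T, ∀ v ∈ T,
      (∀ χ ∈ φs, (MLSat K {w} χ ↔ MLSat K {v} χ)) →
      (MLSat K {w} ψ ↔ MLSat K {v} ψ)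

section Aux
open Classical List

/-- Pointwise (single-world) semantics of `ML`. -/
def wSat {W : Type} (K : Kripke W) : W → MLForm → Prop
  | w, .pos p => w ∈ K.V p
  | w, .neg p => w ∉ K.V p
  | w, .and φ ψ => wSat K w φ ∧ wSat K w ψ
  | w, .or φ ψ => wSat K w φ ∨ wSat K w ψ
  | w, .dia φ => ∃ v, K.R w v ∧ wSat K v φ
  | w, .box φ => ∀ v, K.R w v → wSat K v φ

theorem mlsat_iff {W : Type} (K : Kripke W) (φ : MLForm) (T : Set W) :
    MLSat K T φ ↔ ∀ w ∈ T, wSat K w φ := by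
  induction φ generalizing T with
  | pos p => simp [MLSat, wSat, Set.subset_def]
  | neg p => simp [MLSat, wSat, Set.eq_empty_iff_forall_notMem]
  | and φ ψ ihφ ihψ =>
      simp only [MLSat, wSat, ihφ, ihψ]
      constructor
      · rintro ⟨h1, h2⟩ w hw; exact ⟨h1 w hw, h2 w hw⟩
      · intro h; exact ⟨fun w hw => (h w hw).1, fun w hw => (h w hw).2⟩
  | or φ ψ ihφ ihψ =>
      constructor
      · rintro ⟨T₁, T₂, rfl, h₁, h₂⟩ w hw
        rcases hw with hw | hw
        · exact Or.inl ((ihφ T₁).1 h₁ w hw)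
        · exact Or.inr ((ihψ T₂).1 h₂ w hw)
      · intro h
        refine ⟨{w ∈ T | wSat K w φ}, {w ∈ T | wSat K w ψ}, ?_, ?_, ?_⟩
        · ext w
          constructor
          · rintro (⟨hw, _⟩ | ⟨hw, _⟩) <;> exact hw
          · intro hw; rcases h w hw with h' | h'
            · exact Or.inl ⟨hw, h'⟩
            · exact Or.inr ⟨hw, h'⟩
        · exact (ihφ _).2 fun w hw => hw.2
        · exact (ihψ _).2 fun w hw => hw.2
  | dia φ ih =>
      constructor
      · rintro ⟨T', ⟨hstep, _⟩, h⟩ w hw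
        obtain ⟨v, hv, hr⟩ := hstep w hw
        exact ⟨v, hr, (ih T').1 h v hv⟩
      · intro h
        refine ⟨{v | wSat K v φ ∧ ∃ w ∈ T, K.R w v}, ⟨?_, ?_⟩, ?_⟩
        · intro w hw
          obtain ⟨v, hr, hv⟩ := h w hw
          exact ⟨v, ⟨hv, w, hw, hr⟩, hr⟩
        · rintro v ⟨_, w, hw, hr⟩
          exact ⟨w, hw, hr⟩
        · exact (ih _).2 fun v hv => hv.1
  | box φ ih =>
      simp only [MLSat, wSat, ih]
      constructor
      · rintro h w hw v hr
        exact h v ⟨w, hw, hr⟩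
      · rintro h v ⟨w, hw, hr⟩
        exact h w hw v hr

theorem mlisat_toMLI {W : Type} (K : Kripke W) (φ : MLForm) (T : Set W) :
    MLISat K T φ.toMLI ↔ MLSat K T φ := by
  induction φ generalizing T with
  | pos p => simp [MLForm.toMLI, MLISat, MLSat]
  | neg p => simp [MLForm.toMLI, MLISat, MLSat]
  | and φ ψ ihφ ihψ => simp [MLForm.toMLI, MLISat, MLSat, ihφ, ihψ]
  | or φ ψ ihφ ihψ => simp [MLForm.toMLI, MLISat, MLSat, ihφ, ihψ]
  | dia φ ih => simp [MLForm.toMLI, MLISat, MLSat, ih]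
  | box φ ih => simp [MLForm.toMLI, MLISat, MLSat, ih]

theorem wsat_nnfNeg {W : Type} (K : Kripke W) (φ : MLForm) (w : W) :
    wSat K w φ.nnfNeg ↔ ¬ wSat K w φ := by
  induction φ generalizing w with
  | pos p => simp [MLForm.nnfNeg, wSat]
  | neg p => simp [MLForm.nnfNeg, wSat]
  | and φ ψ ihφ ihψ => simp [MLForm.nnfNeg, wSat, ihφ, ihψ]; tauto
  | or φ ψ ihφ ihψ => simp [MLForm.nnfNeg, wSat, ihφ, ihψ, not_or]
  | dia φ ih => simp [MLForm.nnfNeg, wSat, ih]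
  | box φ ih => simp [MLForm.nnfNeg, wSat, ih]

theorem mlLit_sat {W : Type} (K : Kripke W) (φ : MLForm) (a : Bool) (S : Set W) :
    MLISat K S (mlLit φ a) ↔ ∀ w ∈ S, (wSat K w φ ↔ a = true) := by
  cases a with
  | true =>
      rw [show mlLit φ true = φ.toMLI from rfl, mlisat_toMLI, mlsat_iff]
      simp
  | false =>
      rw [show mlLit φ false = φ.nnfNeg.toMLI from rfl, mlisat_toMLI, mlsat_iff]
      constructor
      · intro h w hw
        simp [(wsat_nnfNeg K φ w).1 (h w hw)]
      · intro h w hw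
        exact (wsat_nnfNeg K φ w).2 (by simpa using h w hw)

def teamUnion {W : Type} (Ts : List (Set W)) : Set W := Ts.foldr (· ∪ ·) ∅

theorem mem_teamUnion {W : Type} (Ts : List (Set W)) (w : W) :
    w ∈ teamUnion Ts ↔ ∃ S ∈ Ts, w ∈ S := by
  induction Ts with
  | nil => simp [teamUnion]
  | cons S Ts ih => simp only [teamUnion, List.foldr_cons, Set.mem_union] at *; simp [ih]

theorem bigOr_sat {W : Type} (K : Kripke W) (l : List MLIForm) (hl : l ≠ [])
    (T : Set W) :
    MLISat K T (mlBigOr l) ↔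
      ∃ Ts : List (Set W), List.Forall₂ (MLISat K) Ts l ∧ teamUnion Ts = T := by
  induction l generalizing T with
  | nil => exact absurd rfl hl
  | cons φ l ih =>
      cases l with
      | nil =>
          simp only [mlBigOr]
          constructor
          · intro h
            exact ⟨[T], by simp [List.forall₂_cons, h], by simp [teamUnion]⟩
          · rintro ⟨Ts, hf, hu⟩
            rcases List.forall₂_cons_right_iff.1 hf with ⟨S, Ts', hS, hTs', rfl⟩
            rcases List.forall₂_nil_right_iff.1 hTs' with rfl
            simp [teamUnion] at hu
            exact hu ▸ hS
      | cons χ l' =>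
          simp only [mlBigOr]
          show (∃ T₁ T₂, T₁ ∪ T₂ = T ∧ _ ∧ _) ↔ _
          constructor
          · rintro ⟨T₁, T₂, rfl, h₁, h₂⟩
            obtain ⟨Ts, hf, hu⟩ := (ih (by simp) T₂).1 h₂
            exact ⟨T₁ :: Ts, List.forall₂_cons.2 ⟨h₁, hf⟩,
              by simp only [teamUnion, List.foldr_cons] at *; rw [hu]⟩
          · rintro ⟨Ts, hf, rfl⟩
            rcases List.forall₂_cons_right_iff.1 hf with ⟨S, Ts', hS, hTs', rfl⟩
            exact ⟨S, teamUnion Ts', rfl, hS,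
              (ih (by simp) _).2 ⟨Ts', hTs', rfl⟩⟩

theorem foldr_and_sat {W : Type} (K : Kripke W) (l : List MLIForm)
    (base : MLIForm) (S : Set W) :
    MLISat K S (l.foldr MLIForm.and base) ↔
      (∀ χ ∈ l, MLISat K S χ) ∧ MLISat K S base := by
  induction l with
  | nil => simp
  | cons χ l ih =>
      show (MLISat K S χ ∧ _) ↔ _
      rw [ih]
      constructor
      · rintro ⟨h, h1, h2⟩
        refine ⟨?_, h2⟩
        intro χ' hχ'
        rcases List.mem_cons.1 hχ' with rfl | h'
        · exact h
        · exact h1 _ h'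
      · rintro ⟨h1, h2⟩
        exact ⟨h1 _ (by simp), fun χ' hχ' => h1 _ (by simp [hχ']), h2⟩

theorem allBLists_length {n : ℕ} {a : List Bool} (h : a ∈ allBLists n) :
    a.length = n := by
  induction n generalizing a with
  | zero => simp [allBLists] at h; simp [h]
  | succ n ih =>
      simp only [allBLists, List.mem_flatMap, List.mem_cons, List.not_mem_nil,
        or_false] at h
      obtain ⟨l, hl, h⟩ := h
      rcases h with h | h <;> simp [h, ih hl]

theorem allBLists_complete {n : ℕ} {a : List Bool} (h : a.length = n) :
    a ∈ allBLists n := by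
  induction n generalizing a with
  | zero => simp [List.length_eq_zero_iff.1 h, allBLists]
  | succ n ih =>
      cases a with
      | nil => simp at h
      | cons b a =>
          simp only [allBLists, List.mem_flatMap]
          refine ⟨a, ih (by simpa using h), ?_⟩
          cases b <;> simp

theorem allBLists_nodup (n : ℕ) : (allBLists n).Nodup := by
  induction n with
  | zero => simp [allBLists]
  | succ n ih =>
      simp only [allBLists]
      refine List.nodup_flatMap.2 ⟨fun l _ => by simp, ?_⟩
      refine ih.imp ?_
      intro l l' hne x hx hx'
      simp only [List.mem_cons, List.mem_singleton, List.not_mem_nil, or_false] at hx hx'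
      rcases hx with rfl | rfl <;> rcases hx' with h | h <;> simp_all

theorem allBLists_ne_nil (n : ℕ) : allBLists n ≠ [] := by
  intro h
  have hx : (List.replicate n true).length = n := by simp
  have := allBLists_complete hx
  rw [h] at this
  exact absurd this List.not_mem_nil

theorem mlDepConj_sat {W : Type} (K : Kripke W) (φs : List MLForm)
    (a : List Bool) (ψ : MLForm) (S : Set W) (ha : a.length = φs.length) :
    MLISat K S (mlDepConj φs a ψ) ↔
      ((∀ i (h : i < φs.length), ∀ w ∈ S,
          (wSat K w (φs[i]) ↔ a[i]'(by omega) = true)) ∧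
        ((∀ w ∈ S, wSat K w ψ) ∨ (∀ w ∈ S, ¬ wSat K w ψ))) := by
  rw [mlDepConj, foldr_and_sat]
  have hz : (List.zipWith mlLit φs a).length = φs.length := by simp [ha]
  have hbase : MLISat K S (MLIForm.idis ψ.toMLI ψ.nnfNeg.toMLI) ↔
      ((∀ w ∈ S, wSat K w ψ) ∨ (∀ w ∈ S, ¬ wSat K w ψ)) := by
    show (MLISat K S ψ.toMLI ∨ MLISat K S ψ.nnfNeg.toMLI) ↔ _
    rw [mlisat_toMLI, mlisat_toMLI, mlsat_iff, mlsat_iff]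
    constructor
    · rintro (h | h)
      · exact Or.inl h
      · exact Or.inr fun w hw => (wsat_nnfNeg K ψ w).1 (h w hw)
    · rintro (h | h)
      · exact Or.inl h
      · exact Or.inr fun w hw => (wsat_nnfNeg K ψ w).2 (h w hw)
  rw [hbase]
  have hlits : (∀ χ ∈ List.zipWith mlLit φs a, MLISat K S χ) ↔
      (∀ i (h : i < φs.length), ∀ w ∈ S,
        (wSat K w (φs[i]) ↔ a[i]'(by omega) = true)) := by
    constructor
    · intro h1 i hi w hw
      have := h1 ((List.zipWith mlLit φs a)[i]'(by omega)) (List.getElem_mem _)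
      rw [List.getElem_zipWith] at this
      exact (mlLit_sat K _ _ S).1 this w hw
    · intro h1 χ hχ
      obtain ⟨i, hi, rfl⟩ := List.mem_iff_getElem.1 hχ
      rw [List.getElem_zipWith]
      exact (mlLit_sat K _ _ S).2 (h1 i (by omega))
  rw [hlits]

end Aux

/-- `K,T` satisfies the extended modal dependence atom
`=(φ₁,…,φₙ,ψ)` iff it satisfies the `ML(⊻)`-formula
`⋁_{a₁,…,aₙ ∈ {⊥,⊤}} (φ₁^{a₁} ∧ … ∧ φₙ^{aₙ} ∧ (ψ ⊻ ψ^⊥))`. -/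

theorem emdl_dep_translation {W : Type} [Nonempty W] (K : Kripke W)
    (T : Set W) (φs : List MLForm) (ψ : MLForm) :
    EMDLSat K T (.dep φs ψ) ↔ MLISat K T (mlDepTranslation φs ψ) := by
  classical
  have hsing : ∀ (w : W) (χ : MLForm), MLSat K {w} χ ↔ wSat K w χ := by
    intro w χ; rw [mlsat_iff]; simp
  rw [mlDepTranslation, bigOr_sat _ _ (by simp [allBLists_ne_nil]) T]
  have hdep_iff : EMDLSat K T (.dep φs ψ) ↔ (∀ w ∈ T, ∀ v ∈ T,
      (∀ χ ∈ φs, (MLSat K {w} χ ↔ MLSat K {v} χ)) →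
      (MLSat K {w} ψ ↔ MLSat K {v} ψ)) := Iff.rfl
  rw [hdep_iff]
  constructor
  · intro hdep
    set F : List Bool → Set W := fun a =>
      {w ∈ T | ∀ i (h : i < φs.length) (h' : i < a.length), wSat K w (φs[i]) ↔ a[i] = true}
      with hF
    refine ⟨(allBLists φs.length).map F, ?_, ?_⟩
    · rw [List.forall₂_map_left_iff, List.forall₂_map_right_iff]
      refine List.forall₂_same.2 fun a ha => ?_
      have hal : a.length = φs.length := allBLists_length ha
      rw [mlDepConj_sat K φs a ψ (F a) (by rw [hal])]
      constructor
      · intro i hi w hw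
        exact hw.2 i hi (by omega)
      · by_cases hne : ∃ w₀, w₀ ∈ F a
        · obtain ⟨w₀, hw₀⟩ := hne
          have key : ∀ w ∈ F a, (wSat K w ψ ↔ wSat K w₀ ψ) := by
            intro w hw
            rw [← hsing, ← hsing]
            refine hdep w hw.1 w₀ hw₀.1 ?_
            intro χ hχ
            obtain ⟨i, hi, rfl⟩ := List.mem_iff_getElem.1 hχ
            rw [hsing, hsing, hw.2 i hi (by omega), hw₀.2 i hi (by omega)]
          by_cases hψ : wSat K w₀ ψ
          · exact Or.inl fun w hw => (key w hw).2 hψ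
          · exact Or.inr fun w hw hc => hψ ((key w hw).1 hc)
        · exact Or.inl fun w hw => absurd ⟨w, hw⟩ hne
    · ext w
      rw [mem_teamUnion]
      constructor
      · rintro ⟨S, hS, hw⟩
        obtain ⟨a, _, rfl⟩ := List.mem_map.1 hS
        exact hw.1
      · intro hw
        refine ⟨F (φs.map fun φ => decide (wSat K w φ)),
          List.mem_map.2 ⟨_, allBLists_complete (by simp), rfl⟩, hw, ?_⟩
        intro i hi h'
        rw [List.getElem_map]
        simp
  · rintro ⟨Ts, hf, rfl⟩ w hw v hv hagree
    obtain ⟨hlen, hget⟩ := List.forall₂_iff_get.1 hf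
    simp only [List.length_map] at hlen
    obtain ⟨Sw, hSw, hwS⟩ := (mem_teamUnion _ _).1 hw
    obtain ⟨Sv, hSv, hvS⟩ := (mem_teamUnion _ _).1 hv
    obtain ⟨i, hi, rfl⟩ := List.mem_iff_getElem.1 hSw
    obtain ⟨j, hj, rfl⟩ := List.mem_iff_getElem.1 hSv
    have hi' : i < (allBLists φs.length).length := by omega
    have hj' : j < (allBLists φs.length).length := by omega
    have hgi := hget i hi (by simp; omega)
    have hgj := hget j hj (by simp; omega)
    simp only [List.get_eq_getElem, List.getElem_map] at hgi hgj
    set ai := (allBLists φs.length)[i]'hi' with hai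
    set aj := (allBLists φs.length)[j]'hj' with haj
    have hail : ai.length = φs.length := allBLists_length (List.getElem_mem _)
    have hajl : aj.length = φs.length := allBLists_length (List.getElem_mem _)
    rw [mlDepConj_sat K φs ai ψ _ (by rw [hail])] at hgi
    rw [mlDepConj_sat K φs aj ψ _ (by rw [hajl])] at hgj
    have heq : ai = aj := by
      refine List.ext_getElem (by omega) ?_
      intro k hk1 hk2
      have hk : k < φs.length := by omega
      have h1 := hgi.1 k hk _ hwS
      have h2 := hgj.1 k hk _ hvS
      have h3 := hagree (φs[k]) (List.getElem_mem _)
      rw [hsing, hsing] at h3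
      rw [Bool.eq_iff_iff]
      rw [← h1, ← h2]
      exact h3
    have hij : i = j := ((allBLists_nodup φs.length).getElem_inj_iff).1 heq
    subst hij
    have hvS' : v ∈ Ts[i] := hvS
    rw [hsing, hsing]
    rcases hgi.2 with h | h
    · simp [h w hwS, h v hvS']
    · simp [h w hwS, h v hvS']
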